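/- Let A be a real n×m matrix, Y a real n×m matrix, g ∈ ℝⁿ, c ∈ ℝᵐ, y ∈ ℝᵐ, and σ > 0. Suppose AᵀA y = Aᵀg − σc (the normal equations defining the multiplier estimate) and g = A y + Y c (stationarity of Fletcher's penalty function). If σ > ‖AᵀY‖₂ (operator 2-norm), then c = 0 and g = A y. -/

import Mathlib

open Matrix

/-- The operator 2-norm of a real matrix: the norm of the induced linear map between
Euclidean spaces. -/
noncomputable def opNorm2 {n m : ℕ} (A : Matrix (Fin n) (Fin m) ℝ) : ℝ :=
  ‖LinearMap.toContinuousLinearMap (Matrix.toEuclideanLin A)‖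

/-- If `AᵀA y = Aᵀg − σc` (normal equations for the multiplier estimate),
`g = Ay + Yc` (stationarity of Fletcher's penalty), and `σ > ‖AᵀY‖₂`, then `c = 0`
and `g = Ay`. -/
theorem fletcher_stationary_implies_feasible
    {n m : ℕ} (A Y : Matrix (Fin n) (Fin m) ℝ)
    (g : Fin n → ℝ) (c y : Fin m → ℝ) (σ : ℝ) (hσ : 0 < σ)
    (hnormal : (Aᵀ * A).mulVec y = Aᵀ.mulVec g - σ • c)
    (hstat : g = A.mulVec y + Y.mulVec c)
    (hbig : opNorm2 (Aᵀ * Y) < σ) :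
    c = 0 ∧ g = A.mulVec y := by
  have key : (Aᵀ * Y).mulVec c = σ • c := by
    have h := hnormal
    rw [hstat, Matrix.mulVec_add, Matrix.mulVec_mulVec, Matrix.mulVec_mulVec] at h
    funext i
    have hi := congrFun h i
    simp only [Pi.sub_apply, Pi.add_apply, Pi.smul_apply, smul_eq_mul] at hi ⊢
    linarith
  have hc : c = 0 := by
    by_contra hc0
    set v : EuclideanSpace ℝ (Fin m) := (WithLp.equiv 2 (Fin m → ℝ)).symm c with hv
    have hvne : v ≠ 0 := by
      simpa [hv] using hc0
    have happ : Matrix.toEuclideanLin (Aᵀ * Y) v = σ • v := by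
      rw [hv, WithLp.equiv_symm_apply, Matrix.toEuclideanLin_toLp, Matrix.toLin'_apply, key]
      rfl
    have hle : ‖Matrix.toEuclideanLin (Aᵀ * Y) v‖ ≤ opNorm2 (Aᵀ * Y) * ‖v‖ := by
      have := (LinearMap.toContinuousLinearMap (Matrix.toEuclideanLin (Aᵀ * Y))).le_opNorm v
      rwa [LinearMap.coe_toContinuousLinearMap'] at this
    rw [happ, norm_smul, Real.norm_eq_abs, abs_of_pos hσ] at hle
    have hvpos : 0 < ‖v‖ := norm_pos_iff.mpr hvne
    nlinarith
  refine ⟨hc, ?_⟩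
  rw [hstat, hc]
  simp
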